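/- Let (X,Y,Z) be a solution of the system (S) and let η be a time at which X(η) ≥ 0, −β/(2α) ≤ Y(η) ≤ 0, and Z(η) = −Y(η)² − (β/α)Y(η) (i.e., the point lies on the parabolic cylinder). Then the function W(η) = Z(η) + Y(η)² + (β/α)Y(η) satisfies W'(η) ≥ 0 at this time; equivalently, for every y ∈ [−β/(2α), 0] one has σ y² + ((σ−1)(β/α) − 2) y − β/α ≤ 0, so the flow of (S) on this part of the cylinder points from the interior toward the exterior. -/

import Mathlib

open Real Set Filter Topology

/-- The self-similar exponent `α = (σ+2)/((σ-2)(m-1))`. -/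
noncomputable def ssAlpha (m σ : ℝ) : ℝ := (σ + 2) / ((σ - 2) * (m - 1))

/-- The self-similar exponent `β = 2/(σ-2)`. -/
noncomputable def ssBeta (σ : ℝ) : ℝ := 2 / (σ - 2)

/-- `(X,Y,Z)` satisfies the quadratic system (S) at time `η`:
`X' = X((m−1)Y − 2X)`, `Y' = −Y² − (β/α)Y + X − XY − Z`, `Z' = (σ−2)XZ`. -/
def SysAt (m σ : ℝ) (X Y Z : ℝ → ℝ) (η : ℝ) : Prop :=
  HasDerivAt X (X η * ((m - 1) * Y η - 2 * X η)) η ∧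
  HasDerivAt Y (-(Y η) ^ 2 - ssBeta σ / ssAlpha m σ * Y η + X η - X η * Y η - Z η) η ∧
  HasDerivAt Z ((σ - 2) * X η * Z η) η

/-- The equilibrium `P0^λ = (0, λ, −λ² − (β/α)λ)` on the critical parabola. -/
noncomputable def P0pt (m σ l : ℝ) : ℝ × ℝ × ℝ :=
  (0, l, -l ^ 2 - ssBeta σ / ssAlpha m σ * l)

/-- The equilibrium `P2 = ((m−1)/(2(m+1)α), 1/((m+1)α), 0)`. -/
noncomputable def P2pt (m σ : ℝ) : ℝ × ℝ × ℝ :=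
  ((m - 1) / (2 * (m + 1) * ssAlpha m σ), 1 / ((m + 1) * ssAlpha m σ), 0)

/-- on the part of the parabolic cylinder `{Z = −Y² − (β/α)Y}` with
`X ≥ 0`, `−β/(2α) ≤ Y ≤ 0`, the flow of (S) points from the interior toward the
exterior: `W = Z + Y² + (β/α)Y` has nonnegative derivative there; equivalently
`σ y² + ((σ−1)(β/α) − 2) y − β/α ≤ 0` for all `y ∈ [−β/(2α), 0]`. -/
theorem flow_on_cylinder_points_outward
    (m σ : ℝ) (hm1 : 1 < m) (hm2 : m < 2) (hσ : 2 < σ)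
    (X Y Z : ℝ → ℝ) (η : ℝ)
    (hsys : SysAt m σ X Y Z η)
    (hX : 0 ≤ X η)
    (hY1 : -(ssBeta σ / (2 * ssAlpha m σ)) ≤ Y η) (hY2 : Y η ≤ 0)
    (hZ : Z η = -(Y η) ^ 2 - ssBeta σ / ssAlpha m σ * Y η) :
    (∀ w' : ℝ,
      HasDerivAt (fun t => Z t + (Y t) ^ 2 + ssBeta σ / ssAlpha m σ * Y t) w' η →
      0 ≤ w') ∧
    ∀ y ∈ Icc (-(ssBeta σ / (2 * ssAlpha m σ))) (0 : ℝ),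
      σ * y ^ 2 + ((σ - 1) * (ssBeta σ / ssAlpha m σ) - 2) * y
        - ssBeta σ / ssAlpha m σ ≤ 0 := by

  obtain ⟨hX', hY', hZ'⟩ := hsys
  have hσ0 : (0:ℝ) < σ - 2 := by linarith
  have hm0 : (0:ℝ) < m - 1 := by linarith
  have hα : 0 < ssAlpha m σ := by
    unfold ssAlpha; positivity
  have hβ : 0 < ssBeta σ := by
    unfold ssBeta; positivity
  set b : ℝ := ssBeta σ / ssAlpha m σ with hbdef
  have hb : 0 < b := div_pos hβ hα
  have hhalf : ssBeta σ / (2 * ssAlpha m σ) = b / 2 := by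
    rw [hbdef, mul_comm, ← div_div]
  have key : ∀ y ∈ Icc (-(ssBeta σ / (2 * ssAlpha m σ))) (0 : ℝ),
      σ * y ^ 2 + ((σ - 1) * b - 2) * y - b ≤ 0 := by
    intro y hy
    rw [hhalf] at hy
    obtain ⟨hy1, hy2⟩ := hy
    nlinarith [mul_nonpos_of_nonpos_of_nonneg hy2 (by linarith : 0 ≤ y + b / 2),
      mul_nonpos_of_nonneg_of_nonpos hb.le hy2]
  refine ⟨?_, key⟩
  intro w' hw'
  have hW : HasDerivAt (fun t => Z t + (Y t) ^ 2 + b * Y t)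
      ((σ - 2) * X η * Z η + 2 * Y η *
        (-(Y η) ^ 2 - b * Y η + X η - X η * Y η - Z η) +
        b * (-(Y η) ^ 2 - b * Y η + X η - X η * Y η - Z η)) η := by
    have h2 : HasDerivAt (fun t => (Y t) ^ 2)
        (2 * Y η * (-(Y η) ^ 2 - b * Y η + X η - X η * Y η - Z η)) η := by
      have := hY'.fun_pow 2
      simpa [mul_comm, mul_assoc, mul_left_comm] using this
    exact (hZ'.add h2).add (hY'.const_mul b)
  have hEq := hw'.unique hW
  rw [hEq]
  have hq := key (Y η) ⟨hY1, hY2⟩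
  have hfact : (σ - 2) * X η * Z η + 2 * Y η *
        (-(Y η) ^ 2 - b * Y η + X η - X η * Y η - Z η) +
        b * (-(Y η) ^ 2 - b * Y η + X η - X η * Y η - Z η)
      = X η * (-(σ * (Y η) ^ 2 + ((σ - 1) * b - 2) * Y η - b)) := by
    rw [hZ]; ring
  rw [hfact]
  exact mul_nonneg hX (by linarith)
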